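/- Let τ ∈ ℍ, let k ≥ 2, N ≥ 1 and D ≥ 1 be integers, let a, b ∈ ℤ, and set ζ_N = exp(2πi/N). With F^{(k+1)}_{(a,b)}(τ) = (−1)^{k+2} k! · Σ_{(m,n) ∈ ℤ² ∖ {(0,0)}} ζ_N^{mb − na} (mτ+n)^{−(k+1)} (absolutely convergent since k+1 ≥ 3), the following identity holds: (−1)^k · k! · D^{−k+1} · Σ over (c,d) with 0 ≤ c,d ≤ D−1, (c,d) ≠ (0,0), of Σ over (m,n) ∈ ℤ², of ζ_N^{(Dm+c)·b − (Dn+d)·a} · (mτ + n + (cτ+d)/D)^{−(k+1)} = D² · F^{(k+1)}_{(a,b)}(τ) − D^{1−k} · F^{(k+1)}_{(Da,Db)}(τ). (This is the lattice-sum computation identifying the specialization of the D-variant of the Kronecker section with the Eisenstein series appearing in Kato's Euler system.) -/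

import Mathlib

open Complex Real

/-- Kato's Eisenstein series of level `N`, weight `w` and parameters `(a,b)`:
`F^{(w)}_{(a,b)}(τ) = (−1)^{w+1} (w−1)! Σ_{(m,n) ∈ ℤ² ∖ {(0,0)}} ζ_N^{mb−na} (mτ+n)^{−w}`,
where `ζ_N = exp(2πi/N)`. -/
noncomputable def katoEisenstein (N : ℕ) (w : ℕ) (a b : ℤ) (τ : ℂ) : ℂ :=
  (-1 : ℂ) ^ (w + 1) * (Nat.factorial (w - 1) : ℂ) *
    ∑' p : ℤ × ℤ,
      if p ≠ (0, 0) then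
        Complex.exp (2 * Real.pi * Complex.I / N) ^ (p.1 * b - p.2 * a) *
          ((p.1 : ℂ) * τ + (p.2 : ℂ)) ^ (-(w : ℤ))
      else 0

/-- Auxiliary summand function. -/
noncomputable def katoF (N : ℕ) (k : ℤ) (a b : ℤ) (τ : ℂ) (p : ℤ × ℤ) : ℂ :=
  Complex.exp (2 * Real.pi * Complex.I / N) ^ (p.1 * b - p.2 * a) *
    ((p.1 : ℂ) * τ + (p.2 : ℂ)) ^ (-k)

lemma abs_zeta_pow (N : ℕ) (j : ℤ) :
    ‖Complex.exp (2 * Real.pi * Complex.I / N) ^ j‖ = 1 := by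
  have h : (2 : ℂ) * Real.pi * Complex.I / N = ((2 * Real.pi / N : ℝ) : ℂ) * Complex.I := by
    push_cast; ring
  rw [norm_zpow, h, Complex.norm_exp_ofReal_mul_I, one_zpow]

lemma katoF_summable (N : ℕ) {k : ℤ} (hk : 3 ≤ k) (a b : ℤ) (τ : ℂ) (hτ : 0 < τ.im) :
    Summable (katoF N k a b τ) := by
  have h := EisensteinSeries.summable_norm_eisSummand hk ⟨τ, hτ⟩
  have h2 : Summable fun p : ℤ × ℤ =>
      ‖EisensteinSeries.eisSummand k ((finTwoArrowEquiv ℤ).symm p) ⟨τ, hτ⟩‖ :=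
    h.comp_injective (finTwoArrowEquiv ℤ).symm.injective
  apply Summable.of_norm
  refine h2.congr fun p => ?_
  simp only [EisensteinSeries.eisSummand, finTwoArrowEquiv_symm_apply, katoF,
    Matrix.cons_val_zero, Matrix.cons_val_one, Matrix.head_cons]
  rw [norm_mul, abs_zeta_pow, one_mul]

theorem kronecker_specialization_eq_kato_eisenstein
    (τ : ℂ) (hτ : 0 < τ.im) (k N D : ℕ) (hk : 2 ≤ k) (hN : 1 ≤ N) (hD : 1 ≤ D)
    (a b : ℤ) :
    (-1 : ℂ) ^ k * (Nat.factorial k : ℂ) * (D : ℂ) ^ (1 - (k : ℤ)) *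
      ∑ cd ∈ (Finset.range D ×ˢ Finset.range D).erase (0, 0),
        ∑' mn : ℤ × ℤ,
          Complex.exp (2 * Real.pi * Complex.I / N) ^
              (((D : ℤ) * mn.1 + (cd.1 : ℤ)) * b - ((D : ℤ) * mn.2 + (cd.2 : ℤ)) * a) *
            ((mn.1 : ℂ) * τ + (mn.2 : ℂ) + ((cd.1 : ℂ) * τ + (cd.2 : ℂ)) / (D : ℂ)) ^
              (-((k : ℤ) + 1))
    = (D : ℂ) ^ 2 * katoEisenstein N (k + 1) a b τ -
        (D : ℂ) ^ (1 - (k : ℤ)) * katoEisenstein N (k + 1) (D * a) (D * b) τ := by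
  have hD0 : (D : ℂ) ≠ 0 := Nat.cast_ne_zero.mpr (by omega)
  have hk3 : (3 : ℤ) ≤ (k : ℤ) + 1 := by omega
  haveI : NeZero D := ⟨by omega⟩
  set f : ℤ × ℤ → ℂ := katoF N ((k : ℤ) + 1) a b τ with hf
  set g : ℤ × ℤ → ℂ := katoF N ((k : ℤ) + 1) (D * a) (D * b) τ with hg
  have hsumf : Summable f := katoF_summable N hk3 a b τ hτ
  -- inner sum rewriting
  set U : ℕ × ℕ → ℂ := fun cd => ∑' mn : ℤ × ℤ,
    f (mn.1 * D + (cd.1 : ℤ), mn.2 * D + (cd.2 : ℤ)) with hU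
  have stepA : ∀ cd : ℕ × ℕ,
      (∑' mn : ℤ × ℤ,
        Complex.exp (2 * Real.pi * Complex.I / N) ^
            (((D : ℤ) * mn.1 + (cd.1 : ℤ)) * b - ((D : ℤ) * mn.2 + (cd.2 : ℤ)) * a) *
          ((mn.1 : ℂ) * τ + (mn.2 : ℂ) + ((cd.1 : ℂ) * τ + (cd.2 : ℂ)) / (D : ℂ)) ^
            (-((k : ℤ) + 1)))
      = (D : ℂ) ^ ((k : ℤ) + 1) * U cd := by
    intro cd
    rw [hU, ← tsum_mul_left]
    refine tsum_congr fun mn => ?_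
    have hE : ((D : ℤ) * mn.1 + (cd.1 : ℤ)) * b - ((D : ℤ) * mn.2 + (cd.2 : ℤ)) * a
        = (mn.1 * D + (cd.1 : ℤ)) * b - (mn.2 * D + (cd.2 : ℤ)) * a := by ring
    have hX : (mn.1 : ℂ) * τ + (mn.2 : ℂ) + ((cd.1 : ℂ) * τ + (cd.2 : ℂ)) / (D : ℂ)
        = (((mn.1 * D + (cd.1 : ℤ) : ℤ) : ℂ) * τ + ((mn.2 * D + (cd.2 : ℤ) : ℤ) : ℂ)) / D := by
      push_cast
      field_simp
      ring
    simp only [hf, katoF]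
    rw [hE, hX, div_zpow, zpow_neg (D : ℂ) ((k : ℤ) + 1), div_inv_eq_mul]
    ring
  -- full lattice sum
  have hfull : ∑ cd ∈ Finset.range D ×ˢ Finset.range D, U cd = ∑' p : ℤ × ℤ, f p := by
    set E : ((Fin D × Fin D) × (ℤ × ℤ)) ≃ ℤ × ℤ :=
      (Equiv.prodComm _ _).trans ((Equiv.prodProdProdComm ℤ ℤ (Fin D) (Fin D)).trans
        (Equiv.prodCongr (Int.divModEquiv D).symm (Int.divModEquiv D).symm)) with hE
    have hs : Summable (fun q : (Fin D × Fin D) × (ℤ × ℤ) => f (E q)) :=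
      hsumf.comp_injective E.injective
    rw [← E.tsum_eq f, hs.tsum_prod, tsum_fintype,
      Finset.sum_product, Fintype.sum_prod_type]
    rw [← Fin.sum_univ_eq_sum_range (fun c => ∑ d ∈ Finset.range D, U (c, d))]
    refine Finset.sum_congr rfl fun c _ => ?_
    rw [← Fin.sum_univ_eq_sum_range (fun d => U ((c : ℕ), d))]
    refine Finset.sum_congr rfl fun d _ => ?_
    refine tsum_congr fun mn => ?_
    simp only [hE, hU, Equiv.trans_apply, Equiv.prodComm_apply, Prod.swap_prod_mk,
      Equiv.prodProdProdComm_apply, Equiv.prodCongr_apply, Prod.map_apply,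
      Int.divModEquiv_symm_apply]
  -- the (0,0) term
  have h00 : U (0, 0) = (D : ℂ) ^ (-((k : ℤ) + 1)) * ∑' p : ℤ × ℤ, g p := by
    rw [hU, ← tsum_mul_left]
    refine tsum_congr fun mn => ?_
    simp only [Nat.cast_zero, add_zero]
    simp only [hf, hg, katoF]
    have hE : (mn.1 * D) * b - (mn.2 * D) * a = mn.1 * ((D : ℤ) * b) - mn.2 * ((D : ℤ) * a) := by
      ring
    have hX : (((mn.1 * D : ℤ)) : ℂ) * τ + ((mn.2 * D : ℤ) : ℂ)
        = ((mn.1 : ℂ) * τ + (mn.2 : ℂ)) * D := by push_cast; ring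
    rw [hE, hX, mul_zpow]
    ring
  -- identify katoEisenstein sums
  have hkato1 : katoEisenstein N (k + 1) a b τ
      = (-1 : ℂ) ^ (k + 2) * (Nat.factorial k : ℂ) * ∑' p : ℤ × ℤ, f p := by
    rw [katoEisenstein, Nat.add_sub_cancel]
    congr 1
    refine tsum_congr fun p => ?_
    by_cases hp : p = (0, 0)
    · subst hp
      simp [hf, katoF, zero_zpow _ (show -((k : ℤ) + 1) ≠ 0 by omega),
        zero_zpow _ (show (-1 + -(k : ℤ)) ≠ 0 by omega)]
    · rw [if_pos hp]
      simp only [hf, katoF]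
      norm_cast
  have hkato2 : katoEisenstein N (k + 1) (D * a) (D * b) τ
      = (-1 : ℂ) ^ (k + 2) * (Nat.factorial k : ℂ) * ∑' p : ℤ × ℤ, g p := by
    rw [katoEisenstein, Nat.add_sub_cancel]
    congr 1
    refine tsum_congr fun p => ?_
    by_cases hp : p = (0, 0)
    · subst hp
      simp [hg, katoF, zero_zpow _ (show -((k : ℤ) + 1) ≠ 0 by omega),
        zero_zpow _ (show (-1 + -(k : ℤ)) ≠ 0 by omega)]
    · rw [if_pos hp]
      simp only [hg, katoF]
      norm_cast
  -- assemble
  have hmem : ((0, 0) : ℕ × ℕ) ∈ Finset.range D ×ˢ Finset.range D := by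
    simp [Finset.mem_product]; omega
  have herase : ∑ cd ∈ (Finset.range D ×ˢ Finset.range D).erase (0, 0),
      ((D : ℂ) ^ ((k : ℤ) + 1) * U cd)
      = (D : ℂ) ^ ((k : ℤ) + 1) * (∑' p : ℤ × ℤ, f p)
        - (D : ℂ) ^ ((k : ℤ) + 1) * U (0, 0) := by
    rw [← Finset.mul_sum, ← mul_sub]
    congr 1
    rw [eq_sub_iff_add_eq, Finset.sum_erase_add _ _ hmem, hfull]
  rw [Finset.sum_congr rfl (fun cd _ => stepA cd), herase, h00, hkato1, hkato2]
  set Sf := ∑' p : ℤ × ℤ, f p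
  set Sg := ∑' p : ℤ × ℤ, g p
  have hzz : (D : ℂ) ^ ((k : ℤ) + 1) * (D : ℂ) ^ (-((k : ℤ) + 1)) = 1 := by
    rw [← zpow_add₀ hD0, show (k : ℤ) + 1 + -((k : ℤ) + 1) = 0 by ring, zpow_zero]
  have hxy : (D : ℂ) ^ (1 - (k : ℤ)) * (D : ℂ) ^ ((k : ℤ) + 1) = (D : ℂ) ^ 2 := by
    rw [← zpow_add₀ hD0, show (1 - (k : ℤ)) + ((k : ℤ) + 1) = ((2 : ℕ) : ℤ) by ring,
      zpow_natCast]
  have hneg : ((-1 : ℂ)) ^ (k + 2) = (-1 : ℂ) ^ k := by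
    rw [pow_add]; norm_num
  rw [hneg]
  linear_combination ((-1 : ℂ) ^ k * (Nat.factorial k : ℂ) * Sf) * hxy -
    ((-1 : ℂ) ^ k * (Nat.factorial k : ℂ) * (D : ℂ) ^ (1 - (k : ℤ)) * Sg) * hzz
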